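/- Let T₁ and T₂ be trees of height ω₁ all of whose levels are countable, in which any two elements have a meet, and suppose there exists a specialising function for (T₁, T₂). Then T₁ and T₂ are both special; in particular both are Aronszajn trees. -/

import Mathlib

universe u

open Cardinal Ordinal Set Classical

noncomputable def omega1 : Ordinal.{u} := (Cardinal.aleph 1).ord

/-- A tree: a partial order in which the set of strict predecessors of each element
is well-ordered by `<`. -/
def IsTree (T : Type u) [PartialOrder T] : Prop :=
  ∀ x : T, IsWellOrder {y : T // y < x} (fun a b => (a : T) < (b : T))

/-- The height of an element of a tree: the order type of its set of strict predecessors. -/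
noncomputable def treeHeight {T : Type u} [PartialOrder T] (x : T) : Ordinal.{u} :=
  if h : IsWellOrder {y : T // y < x} (fun a b => (a : T) < (b : T)) then
    @Ordinal.type _ _ h else 0

/-- The tree has height `ω₁`: every level below `ω₁` is nonempty and the level `ω₁` is empty
(equivalently, all heights are `< ω₁`). -/
def HasHeightOmega1 (T : Type u) [PartialOrder T] : Prop :=
  (∀ α : Ordinal.{u}, α < omega1.{u} → ∃ x : T, treeHeight x = α) ∧
    ∀ x : T, treeHeight x < omega1.{u}

def NoUncountableChain (T : Type u) [PartialOrder T] : Prop :=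
  ∀ C : Set T, IsChain (· < ·) C → C.Countable

def IsWideAronszajn (T : Type u) [PartialOrder T] : Prop :=
  IsTree T ∧ Cardinal.mk T = Cardinal.aleph.{u} 1 ∧ HasHeightOmega1 T ∧ NoUncountableChain T

def IsAronszajn (T : Type u) [PartialOrder T] : Prop :=
  IsTree T ∧ HasHeightOmega1 T ∧
    (∀ α : Ordinal.{u}, {x : T | treeHeight x = α}.Countable) ∧ NoUncountableChain T

def IsWeakEmbedding {T₁ T₂ : Type u} [PartialOrder T₁] [PartialOrder T₂] (f : T₁ → T₂) : Prop :=
  ∀ x y : T₁, x < y → f x < f y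

/-- Martin's axiom for ℵ₁ many dense sets. -/
def MAomega1 : Prop :=
  ∀ (P : Type u) [PartialOrder P], Nonempty P →
    (∀ A : Set P, (A.Pairwise fun p q => ¬ ∃ r, p ≤ r ∧ q ≤ r) → A.Countable) →
    ∀ 𝒟 : Set (Set P), Cardinal.mk 𝒟 ≤ Cardinal.aleph.{u} 1 →
      (∀ D ∈ 𝒟, ∀ p : P, ∃ q ∈ D, p ≤ q) →
      ∃ G : Set P, (∀ p ∈ G, ∀ q ∈ G, ∃ r ∈ G, p ≤ r ∧ q ≤ r) ∧
        (∀ p ∈ G, ∀ q, q ≤ p → q ∈ G) ∧ ∀ D ∈ 𝒟, (G ∩ D).Nonempty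

/-- A bundled partially ordered type. -/
structure PoType : Type (u + 1) where
  carrier : Type u
  str : PartialOrder carrier

attribute [instance] PoType.str

/-- A specialising function for a pair of trees with meets: a colouring of the pairs
`(x, y)` lying on equal limit levels such that equal colours force incomparability on
both sides and `ht (x₁ ⊓ x₂) > ht (y₁ ⊓ y₂)`. -/
def IsSpecialisingFunction {T₁ T₂ : Type u} [SemilatticeInf T₁] [SemilatticeInf T₂]
    (c : T₁ → T₂ → ℕ) : Prop :=
  ∀ x₁ y₁ x₂ y₂,
    treeHeight x₁ = treeHeight y₁ → Order.IsSuccLimit (treeHeight x₁) →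
    treeHeight x₂ = treeHeight y₂ → Order.IsSuccLimit (treeHeight x₂) →
    c x₁ y₁ = c x₂ y₂ → ¬ (x₁ = x₂ ∧ y₁ = y₂) →
      treeHeight x₁ ≠ treeHeight x₂ ∧
      (¬ x₁ ≤ x₂ ∧ ¬ x₂ ≤ x₁) ∧ (¬ y₁ ≤ y₂ ∧ ¬ y₂ ≤ y₁) ∧
      treeHeight ((y₁ : T₂) ⊓ y₂) < treeHeight ((x₁ : T₁) ⊓ x₂)

/-- A tree is special if it is the union of countably many antichains. -/
def IsSpecialTree (T : Type u) [PartialOrder T] : Prop :=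
  ∃ A : ℕ → Set T, (∀ n, IsAntichain (· ≤ ·) (A n)) ∧ ∀ x : T, ∃ n, x ∈ A n

section TreeLemmas

variable {T : Type u} [PartialOrder T]

theorem treeHeight_eq (hT : IsTree T) (x : T) :
    treeHeight x = @Ordinal.type _ (fun a b : {y : T // y < x} => (a : T) < (b : T)) (hT x) :=
  dif_pos (hT x)

theorem treeHeight_coe (hT : IsTree T) {y : T} (z : {w : T // w < y}) :
    treeHeight (z : T) =
      @Ordinal.typein _ (fun a b : {w : T // w < y} => (a : T) < (b : T)) (hT y) z := by
  letI := hT y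
  letI := hT (z : T)
  rw [treeHeight_eq hT,
    ← @Ordinal.type_subrel _ (fun a b : {w : T // w < y} => (a : T) < (b : T)) (hT y) z]
  refine Ordinal.type_eq.mpr ⟨RelIso.mk
    (Equiv.mk (fun w => ⟨⟨w.1, lt_trans w.2 z.2⟩, w.2⟩) (fun b => ⟨b.1.1, b.2⟩)
      (fun w => rfl) (fun b => rfl)) ?_⟩
  intro a b
  exact Iff.rfl

theorem treeHeight_lt (hT : IsTree T) {x y : T} (hxy : x < y) :
    treeHeight x < treeHeight y := by
  letI := hT y
  have := treeHeight_coe hT (⟨x, hxy⟩ : {w : T // w < y})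
  rw [treeHeight_eq hT y]
  rw [show x = ((⟨x, hxy⟩ : {w : T // w < y}) : T) from rfl, this]
  exact Ordinal.typein_lt_type _ _

theorem exists_pred (hT : IsTree T) {y : T} {β : Ordinal.{u}} (hβ : β < treeHeight y) :
    ∃ z : T, z < y ∧ treeHeight z = β := by
  letI := hT y
  rw [treeHeight_eq hT y] at hβ
  obtain ⟨a, ha⟩ := Ordinal.typein_surj _ hβ
  exact ⟨a.1, a.2, by rw [treeHeight_coe hT a, ha]⟩

theorem pred_tricho (hT : IsTree T) {y z w : T} (hz : z < y) (hw : w < y) :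
    z < w ∨ z = w ∨ w < z := by
  rcases (@trichotomous_of _ (fun a b : {w : T // w < y} => (a : T) < (b : T)) (hT y).toTrichotomous) ⟨z, hz⟩ ⟨w, hw⟩ with h | h | h
  · exact Or.inl h
  · exact Or.inr (Or.inl (congrArg Subtype.val h))
  · exact Or.inr (Or.inr h)

theorem pred_lt_of_ht_lt (hT : IsTree T) {y z w : T} (hz : z < y) (hw : w < y)
    (h : treeHeight z < treeHeight w) : z < w := by
  rcases pred_tricho hT hz hw with h' | h' | h'
  · exact h'
  · exact absurd (h' ▸ h) (lt_irrefl _)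
  · exact absurd (lt_trans h (treeHeight_lt hT h')) (lt_irrefl _)

theorem pred_eq_of_ht_eq (hT : IsTree T) {y z w : T} (hz : z < y) (hw : w < y)
    (h : treeHeight z = treeHeight w) : z = w := by
  rcases pred_tricho hT hz hw with h' | h' | h'
  · exact absurd (h ▸ treeHeight_lt hT h') (lt_irrefl _)
  · exact h'
  · exact absurd (h ▸ treeHeight_lt hT h') (lt_irrefl _)

end TreeLemmas

theorem special_of_fn {T : Type u} [PartialOrder T] {ι : Type} [Encodable ι]
    (f : T → ι) (hf : ∀ x y : T, f x = f y → ¬ x < y) : IsSpecialTree T := by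
  refine ⟨fun n => {x | Encodable.encode (f x) = n}, fun n => ?_, fun x => ⟨_, rfl⟩⟩
  intro x hx y hy hne hle
  have hfe : f x = f y := Encodable.encode_injective (hx.trans hy.symm)
  exact hf x y hfe (lt_of_le_of_ne hle hne)

theorem special_of_limit_colour {T : Type u} [PartialOrder T] (hT : IsTree T)
    (d : T → ℕ)
    (hd : ∀ x y : T, Order.IsSuccLimit (treeHeight x) → Order.IsSuccLimit (treeHeight y) →
      d x = d y → x ≠ y → ¬ x ≤ y) : IsSpecialTree T := by
  classical
  -- auxiliary data
  set lam : T → Ordinal.{u} := fun x => ω * (treeHeight x / ω) with hlam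
  have res : ∀ x : T, ∀ β : Ordinal.{u}, β < treeHeight x → {z : T // z < x ∧ treeHeight z = β} :=
    fun x β h => ⟨(exists_pred hT h).choose, (exists_pred hT h).choose_spec⟩
  -- decompose: key facts for non-limit infinite heights
  have key : ∀ x : T, ¬ Order.IsSuccLimit (treeHeight x) → ¬ treeHeight x < ω →
      Order.IsSuccLimit (lam x) ∧ lam x < treeHeight x := by
    intro x hnl hnf
    have hω : ω ≤ treeHeight x := not_lt.mp hnf
    have hq : (0 : Ordinal) < treeHeight x / ω :=
      (Ordinal.div_pos Ordinal.omega0_ne_zero).mpr hω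
    have hlim : Order.IsSuccLimit (lam x) := Ordinal.isSuccLimit_mul_left Ordinal.isSuccLimit_omega0 hq
    have hdm : lam x + treeHeight x % ω = treeHeight x := Ordinal.div_add_mod _ _
    have hm0 : treeHeight x % ω ≠ 0 := by
      intro h0
      apply hnl
      rw [← hdm, h0, add_zero]
      exact hlim
    refine ⟨hlim, ?_⟩
    calc lam x = lam x + 0 := (add_zero _).symm
      _ < lam x + treeHeight x % ω := by
          exact (add_lt_add_iff_left _).mpr (pos_iff_ne_zero.mpr hm0)
      _ = treeHeight x := hdm
  -- nat extraction
  have natof : ∀ α : Ordinal.{u}, α < ω → {n : ℕ // (n : Ordinal) = α} := by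
    intro α h
    exact ⟨(Ordinal.lt_omega0.mp h).choose, (Ordinal.lt_omega0.mp h).choose_spec.symm⟩
  -- the colouring function
  let f : T → ℕ ⊕ ℕ ⊕ ℕ × ℕ := fun x =>
    if h0 : Order.IsSuccLimit (treeHeight x) then Sum.inl (d x)
    else if hf : treeHeight x < ω then Sum.inr (Sum.inl (natof _ hf))
    else Sum.inr (Sum.inr
      (d (res x (lam x) (key x h0 hf).2),
       natof (treeHeight x % ω) (Ordinal.mod_lt _ Ordinal.omega0_ne_zero)))
  apply special_of_fn f
  intro x y hfxy hlt
  have hab : treeHeight x < treeHeight y := treeHeight_lt hT hlt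
  by_cases hx : Order.IsSuccLimit (treeHeight x) <;> by_cases hy : Order.IsSuccLimit (treeHeight y)
  · simp only [f, dif_pos hx, dif_pos hy, Sum.inl.injEq] at hfxy
    exact hd x y hx hy hfxy (ne_of_lt hlt) (le_of_lt hlt)
  · simp only [f, dif_pos hx, dif_neg hy] at hfxy
    split_ifs at hfxy
  · simp only [f, dif_neg hx, dif_pos hy] at hfxy
    split_ifs at hfxy
  · by_cases hfx : treeHeight x < ω <;> by_cases hfy : treeHeight y < ω
    · simp only [f, dif_neg hx, dif_neg hy, dif_pos hfx, dif_pos hfy,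
        Sum.inr.injEq, Sum.inl.injEq] at hfxy
      have : treeHeight x = treeHeight y := by
        rw [← (natof _ hfx).2, ← (natof _ hfy).2, hfxy]
      exact absurd (this ▸ hab) (lt_irrefl _)
    · simp only [f, dif_neg hx, dif_neg hy, dif_pos hfx, dif_neg hfy] at hfxy
      simp at hfxy
    · simp only [f, dif_neg hx, dif_neg hy, dif_neg hfx, dif_pos hfy] at hfxy
      simp at hfxy
    · -- the main case
      simp only [f, dif_neg hx, dif_neg hy, dif_neg hfx, dif_neg hfy,
        Sum.inr.injEq, Prod.mk.injEq] at hfxy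
      obtain ⟨hcol, hmod⟩ := hfxy
      obtain ⟨hlx, hltx⟩ := key x hx hfx
      obtain ⟨hly, hlty⟩ := key y hy hfy
      set zx := res x (lam x) hltx with hzx
      set zy := res y (lam y) hlty with hzy
      have hxy_le : lam x ≤ lam y := by
        apply mul_le_mul_right
        rw [Ordinal.le_div Ordinal.omega0_ne_zero]
        calc ω * (treeHeight x / ω) ≤ treeHeight x := Ordinal.mul_div_le _ _
          _ ≤ treeHeight y := le_of_lt hab
      rcases eq_or_lt_of_le hxy_le with heq | hlt'
      · -- equal limit parts: heights equal, contradiction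
        have hmx := (natof (treeHeight x % ω) (Ordinal.mod_lt _ Ordinal.omega0_ne_zero)).2
        have hmy := (natof (treeHeight y % ω) (Ordinal.mod_lt _ Ordinal.omega0_ne_zero)).2
        have : treeHeight x = treeHeight y := by
          rw [← Ordinal.div_add_mod (treeHeight x) ω, ← Ordinal.div_add_mod (treeHeight y) ω,
            ← hmx, ← hmy, hmod]
          exact congrArg (fun t => t + ((natof (treeHeight y % ω) (Ordinal.mod_lt _ Ordinal.omega0_ne_zero) : ℕ) : Ordinal)) heq
        exact absurd (this ▸ hab) (lt_irrefl _)
      · -- lam x < lam y : zx and zy are comparable predecessors of y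
        have hzxy : (zx : T) < y := lt_trans zx.2.1 hlt
        have hhzx : treeHeight (zx : T) = lam x := zx.2.2
        have hhzy : treeHeight (zy : T) = lam y := zy.2.2
        have hzlt : (zx : T) < (zy : T) := by
          apply pred_lt_of_ht_lt hT hzxy zy.2.1
          rw [hhzx, hhzy]; exact hlt'
        have : ¬ (zx : T) ≤ (zy : T) := by
          apply hd _ _ ?_ ?_ hcol (ne_of_lt hzlt)
          · rw [hhzx]; exact hlx
          · rw [hhzy]; exact hly
        exact this (le_of_lt hzlt)


theorem chain_countable_of_special {T : Type u} [PartialOrder T]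
    (hS : IsSpecialTree T) : NoUncountableChain T := by
  obtain ⟨A, hA, hcov⟩ := hS
  intro C hC
  have hCeq : C = ⋃ n, C ∩ A n := by
    ext x
    simp only [Set.mem_iUnion, Set.mem_inter_iff]
    constructor
    · intro hx
      obtain ⟨n, hn⟩ := hcov x
      exact ⟨n, hx, hn⟩
    · rintro ⟨n, hx, -⟩
      exact hx
  rw [hCeq]
  apply Set.countable_iUnion
  intro n
  apply Set.Subsingleton.countable
  rintro a ⟨haC, haA⟩ b ⟨hbC, hbA⟩
  by_contra hne
  rcases hC haC hbC hne with h | h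
  · exact hA n haA hbA hne (le_of_lt h)
  · exact hA n hbA haA (Ne.symm hne) (le_of_lt h)

/-- If `(T₁, T₂, c)` is a specialising triple of trees of height `ω₁` with countable
levels, then both trees are special, hence Aronszajn. -/
theorem specialising_triple_special {T₁ T₂ : Type u}
    [SemilatticeInf T₁] [SemilatticeInf T₂]
    (h₁ : IsTree T₁) (h₂ : IsTree T₂)
    (hh₁ : HasHeightOmega1 T₁) (hh₂ : HasHeightOmega1 T₂)
    (hl₁ : ∀ α : Ordinal.{u}, {x : T₁ | treeHeight x = α}.Countable)
    (hl₂ : ∀ α : Ordinal.{u}, {x : T₂ | treeHeight x = α}.Countable)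
    (c : T₁ → T₂ → ℕ) (hc : IsSpecialisingFunction c) :
    IsSpecialTree T₁ ∧ IsSpecialTree T₂ ∧ IsAronszajn T₁ ∧ IsAronszajn T₂ := by
  classical
  have ysel : ∀ x : T₁, {y : T₂ // treeHeight y = treeHeight x} :=
    fun x => ⟨(hh₂.1 _ (hh₁.2 x)).choose, (hh₂.1 _ (hh₁.2 x)).choose_spec⟩
  have xsel : ∀ y : T₂, {x : T₁ // treeHeight x = treeHeight y} :=
    fun y => ⟨(hh₁.1 _ (hh₂.2 y)).choose, (hh₁.1 _ (hh₂.2 y)).choose_spec⟩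
  have hs₁ : IsSpecialTree T₁ := by
    apply special_of_limit_colour h₁ (fun x => c x (ysel x))
    intro x y hx hy hcol hne
    exact (hc x (ysel x) y (ysel y) (ysel x).2.symm hx (ysel y).2.symm hy hcol
      (fun h => hne h.1)).2.1.1
  have hs₂ : IsSpecialTree T₂ := by
    apply special_of_limit_colour h₂ (fun y => c (xsel y) y)
    intro y₁ y₂ hy₁ hy₂ hcol hne
    have hl1 : Order.IsSuccLimit (treeHeight ((xsel y₁) : T₁)) := by rw [(xsel y₁).2]; exact hy₁
    have hl2 : Order.IsSuccLimit (treeHeight ((xsel y₂) : T₁)) := by rw [(xsel y₂).2]; exact hy₂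
    exact (hc (xsel y₁) y₁ (xsel y₂) y₂ (xsel y₁).2 hl1 (xsel y₂).2 hl2 hcol
      (fun h => hne h.2)).2.2.1.1
  exact ⟨hs₁, hs₂, ⟨h₁, hh₁, hl₁, chain_countable_of_special hs₁⟩,
    ⟨h₂, hh₂, hl₂, chain_countable_of_special hs₂⟩⟩
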